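/- For k = 1,2,3 let M_k be the upper triangular 3×3 complex matrix with diagonal entries μ_k^{(1)}, μ_k^{(2)}, μ_k^{(3)}, (1,2)-entry α_k, (2,3)-entry β_k and (1,3)-entry γ_k, and assume M_1 M_2 M_3 = I. Assume further that the only subspaces of ℂ^3 different from {0} and ℂ^3 that are invariant under all of M_1, M_2, M_3 are span{e_1} and span{e_1, e_2} (where e_1, e_2 are the first two standard basis vectors). For k = 1,2,3 let M̃_k be the upper triangular matrix with the same entries as M_k except that γ_k is replaced by γ̃_k ∈ ℂ. Then the triples [M_1, M_2, M_3] and [M̃_1, M̃_2, M̃_3] are equivalent if and only if there exist α, β, γ ∈ ℂ such that for every k = 1,2,3: α·(μ_k^{(1)} − μ_k^{(2)}) = 0, β·(μ_k^{(2)} − μ_k^{(3)}) = 0, and γ̃_k = γ_k + γ·(μ_k^{(1)} − μ_k^{(3)}) − α·β_k + β·α_k. -/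
import Mathlib

private lemma tri_mulVec (p q r A B G : ℂ) (x : Fin 3 → ℂ) :
    (!![p, A, G; 0, q, B; 0, 0, r]).mulVec x
      = ![p*x 0 + A*x 1 + G*x 2, q*x 1 + B*x 2, r*x 2] := by
  funext i; fin_cases i <;>
    simp [Matrix.mulVec, dotProduct, Fin.sum_univ_three,
      Matrix.vecHead, Matrix.vecTail]

/-- membership in a span of a pair with first coord arguments etc. -/
private lemma pair_span_contra (u : Fin 3 → ℂ)
    (h0 : (![1,0,0] : Fin 3 → ℂ) ∈ Submodule.span ℂ {u})
    (h1 : (![0,1,0] : Fin 3 → ℂ) ∈ Submodule.span ℂ {u}) : False := by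
  rw [Submodule.mem_span_singleton] at h0 h1
  obtain ⟨c, hc⟩ := h0
  obtain ⟨d, hd⟩ := h1
  have hc0 : c * u 0 = 1 := by simpa using congrFun hc 0
  have hc1 : c * u 1 = 0 := by simpa using congrFun hc 1
  have hd0 : d * u 0 = 0 := by simpa using congrFun hd 0
  have hd1 : d * u 1 = 1 := by simpa using congrFun hd 1
  have : (1 : ℂ) * 1 = 0 := by
    calc (1:ℂ) * 1 = (c * u 0) * (d * u 1) := by rw [hc0, hd1]
    _ = (c * u 1) * (d * u 0) := by ring
    _ = 0 := by rw [hc1]; ring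
  simp at this

/-- (Proposition 7.1 of the paper.) For triples of upper
triangular `3×3` matrices with product `I` whose only non-trivial common
invariant subspaces are `span{e₁}` and `span{e₁,e₂}`, changing only the
`(1,3)`-entries `γ_k ↦ γ̃_k` yields an equivalent triple iff there exist
`α, β, γ ∈ ℂ` with `α(μ_k^{(1)}−μ_k^{(2)}) = 0`, `β(μ_k^{(2)}−μ_k^{(3)}) = 0`
and `γ̃_k = γ_k + γ(μ_k^{(1)}−μ_k^{(3)}) − α β_k + β α_k` for all `k`. -/
theorem stmt3 (μ₁ μ₂ μ₃ a b g g' : Fin 3 → ℂ)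
    (M M' : Fin 3 → Matrix (Fin 3) (Fin 3) ℂ)
    (hM : ∀ k, M k = !![μ₁ k, a k, g k; 0, μ₂ k, b k; 0, 0, μ₃ k])
    (hM' : ∀ k, M' k = !![μ₁ k, a k, g' k; 0, μ₂ k, b k; 0, 0, μ₃ k])
    (hprod : M 0 * M 1 * M 2 = 1)
    (L₁ L₂ : Submodule ℂ (Fin 3 → ℂ))
    (hL₁ : L₁ = Submodule.span ℂ {Pi.single (0 : Fin 3) (1 : ℂ)})
    (hL₂ : L₂ = Submodule.span ℂ {Pi.single (0 : Fin 3) (1 : ℂ), Pi.single (1 : Fin 3) (1 : ℂ)})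
    (hinv₁ : ∀ k, ∀ v ∈ L₁, (M k).mulVec v ∈ L₁)
    (hinv₂ : ∀ k, ∀ v ∈ L₂, (M k).mulVec v ∈ L₂)
    (honly : ∀ X : Submodule ℂ (Fin 3 → ℂ),
      (∀ k, ∀ v ∈ X, (M k).mulVec v ∈ X) → X = ⊥ ∨ X = ⊤ ∨ X = L₁ ∨ X = L₂) :
    (∃ C : Matrix (Fin 3) (Fin 3) ℂ, IsUnit C ∧ ∀ k, M' k = C⁻¹ * M k * C) ↔
      ∃ al be ga : ℂ, ∀ k,
        al * (μ₁ k - μ₂ k) = 0 ∧ be * (μ₂ k - μ₃ k) = 0 ∧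
          g' k = g k + ga * (μ₁ k - μ₃ k) - al * b k + be * a k := by
  have hs0 : Pi.single (0 : Fin 3) (1 : ℂ) = ![1,0,0] := by
    funext i; fin_cases i <;> simp
  have hs1 : Pi.single (1 : Fin 3) (1 : ℂ) = ![0,1,0] := by
    funext i; fin_cases i <;> simp
  rw [hs0] at hL₁
  rw [hs0, hs1] at hL₂
  -- elements of L₁ resp. L₂ have vanishing coordinates
  have hL₁mem : ∀ x ∈ L₁, x 1 = 0 ∧ x 2 = 0 := by
    intro x hx
    rw [hL₁] at hx
    rw [Submodule.mem_span_singleton] at hx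
    obtain ⟨c, rfl⟩ := hx
    constructor <;> simp
  have hL₂mem : ∀ x ∈ L₂, x 2 = 0 := by
    intro x hx
    rw [hL₂] at hx
    rw [Submodule.mem_span_pair] at hx
    obtain ⟨c, d, rfl⟩ := hx
    simp
  constructor
  · rintro ⟨C, hCu, hC⟩
    have hdet : IsUnit C.det := (Matrix.isUnit_iff_isUnit_det C).mp hCu
    have hCC : C⁻¹ * C = 1 := Matrix.nonsing_inv_mul C hdet
    have hCC' : C * C⁻¹ = 1 := Matrix.mul_nonsing_inv C hdet
    have hcm : ∀ k, C * M' k = M k * C := by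
      intro k
      rw [hC k, ← Matrix.mul_assoc, ← Matrix.mul_assoc, hCC', Matrix.one_mul]
    -- injectivity of mulVec by C
    have hinj : ∀ x : Fin 3 → ℂ, C.mulVec x = 0 → x = 0 := by
      intro x hx
      have : C⁻¹.mulVec (C.mulVec x) = 0 := by rw [hx]; simp [Matrix.mulVec_zero]
      rwa [Matrix.mulVec_mulVec, hCC, Matrix.one_mulVec] at this
    -- intertwining on vectors
    have hMC : ∀ k (x : Fin 3 → ℂ),
        (M k).mulVec (C.mulVec x) = C.mulVec ((M' k).mulVec x) := by
      intro k x
      rw [Matrix.mulVec_mulVec, Matrix.mulVec_mulVec, hcm k]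
    set u : Fin 3 → ℂ := C.mulVec ![1,0,0] with hu_def
    set w : Fin 3 → ℂ := C.mulVec ![0,1,0] with hw_def
    have hu : u = ![C 0 0, C 1 0, C 2 0] := by
      funext i; fin_cases i <;>
        simp [hu_def, Matrix.mulVec, dotProduct, Fin.sum_univ_three,
          Matrix.vecHead, Matrix.vecTail]
    have hw : w = ![C 0 1, C 1 1, C 2 1] := by
      funext i; fin_cases i <;>
        simp [hw_def, Matrix.mulVec, dotProduct, Fin.sum_univ_three,
          Matrix.vecHead, Matrix.vecTail]
    have hM'e0 : ∀ k, (M' k).mulVec ![1,0,0] = μ₁ k • ![1,0,0] := by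
      intro k
      rw [hM' k, tri_mulVec]
      funext i; fin_cases i <;> simp
    have hM'e1 : ∀ k, (M' k).mulVec ![0,1,0] = a k • ![1,0,0] + μ₂ k • ![0,1,0] := by
      intro k
      rw [hM' k, tri_mulVec]
      funext i; fin_cases i <;> simp
    have hMu : ∀ k, (M k).mulVec u = μ₁ k • u := by
      intro k
      rw [hu_def, hMC k, hM'e0 k, Matrix.mulVec_smul]
    have hMw : ∀ k, (M k).mulVec w = a k • u + μ₂ k • w := by
      intro k
      rw [hw_def, hMC k, hM'e1 k, Matrix.mulVec_add, Matrix.mulVec_smul, Matrix.mulVec_smul]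
    have hune : u ≠ 0 := by
      intro h
      have h0 : (![1,0,0] : Fin 3 → ℂ) = 0 := hinj _ h
      simpa using congrFun h0 0
    -- Step A : the image of span{e₀} is L₁, hence column 0 of C is (⋆,0,0)
    have hC10 : C 1 0 = 0 ∧ C 2 0 = 0 := by
      have hXinv : ∀ k, ∀ v ∈ Submodule.span ℂ {u}, (M k).mulVec v ∈ Submodule.span ℂ {u} := by
        intro k v hv
        rw [Submodule.mem_span_singleton] at hv ⊢
        obtain ⟨c, rfl⟩ := hv
        exact ⟨c * μ₁ k, by rw [Matrix.mulVec_smul, hMu k, smul_smul]⟩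
      rcases honly _ hXinv with h | h | h | h
      · exfalso
        have : u ∈ (⊥ : Submodule ℂ (Fin 3 → ℂ)) := h ▸ Submodule.mem_span_singleton_self u
        exact hune (by simpa using this)
      · exfalso
        exact pair_span_contra u (h ▸ Submodule.mem_top) (h ▸ Submodule.mem_top)
      · -- the good case
        have : u ∈ L₁ := h ▸ Submodule.mem_span_singleton_self u
        have h2 := hL₁mem u this
        rw [hu] at h2
        simpa using h2
      · exfalso
        have h0 : (![1,0,0] : Fin 3 → ℂ) ∈ Submodule.span ℂ {u} := by
          rw [h, hL₂]; exact Submodule.subset_span (by simp)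
        have h1 : (![0,1,0] : Fin 3 → ℂ) ∈ Submodule.span ℂ {u} := by
          rw [h, hL₂]; exact Submodule.subset_span (by simp)
        exact pair_span_contra u h0 h1
    obtain ⟨hC10, hC20⟩ := hC10
    -- Step B : the image of span{e₀,e₁} is L₂, hence C 2 1 = 0
    have hC21 : C 2 1 = 0 := by
      have hXinv : ∀ k, ∀ v ∈ Submodule.span ℂ {u, w}, (M k).mulVec v ∈ Submodule.span ℂ {u, w} := by
        intro k v hv
        rw [Submodule.mem_span_pair] at hv ⊢
        obtain ⟨c, d, rfl⟩ := hv
        refine ⟨c * μ₁ k + d * a k, d * μ₂ k, ?_⟩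
        rw [Matrix.mulVec_add, Matrix.mulVec_smul, Matrix.mulVec_smul, hMu k, hMw k]
        module
      rcases honly _ hXinv with h | h | h | h
      · exfalso
        have : u ∈ (⊥ : Submodule ℂ (Fin 3 → ℂ)) :=
          h ▸ Submodule.subset_span (by simp)
        exact hune (by simpa using this)
      · exfalso
        -- then C⁻¹ has zero bottom row, contradicting C⁻¹ * C = 1
        have hrow : ∀ v : Fin 3 → ℂ, (C⁻¹.mulVec v) 2 = 0 := by
          intro v
          have hv : v ∈ Submodule.span ℂ {u, w} := h ▸ Submodule.mem_top
          rw [Submodule.mem_span_pair] at hv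
          obtain ⟨c, d, rfl⟩ := hv
          have : C⁻¹.mulVec (c • u + d • w) = c • ![1,0,0] + d • ![0,1,0] := by
            rw [hu_def, hw_def, ← Matrix.mulVec_smul, ← Matrix.mulVec_smul,
              ← Matrix.mulVec_add, Matrix.mulVec_mulVec, hCC, Matrix.one_mulVec]
          rw [this]
          simp
        have h22 : (C⁻¹ * C) 2 2 = 0 := by
          have h0 := hrow (C.mulVec ![0,0,1])
          rw [Matrix.mulVec_mulVec] at h0
          have : ((C⁻¹ * C).mulVec ![0,0,1]) 2 = (C⁻¹ * C) 2 2 := by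
            simp [Matrix.mulVec, dotProduct, Fin.sum_univ_three,
              Matrix.vecHead, Matrix.vecTail]
          rw [this] at h0
          exact h0
        rw [hCC] at h22
        simp at h22
      · exfalso
        have hup : u ∈ L₁ := h ▸ Submodule.subset_span (by simp)
        have hwp : w ∈ L₁ := h ▸ Submodule.subset_span (by simp)
        obtain ⟨hu1, hu2⟩ := hL₁mem u hup
        obtain ⟨hw1, hw2⟩ := hL₁mem w hwp
        rw [hu] at hu1 hu2
        rw [hw] at hw1 hw2
        simp at hu1 hu2 hw1 hw2
        -- columns 0 and 1 of C are parallel, contradicting injectivity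
        have hx : C.mulVec (C 0 1 • ![1,0,0] - C 0 0 • ![0,1,0]) = 0 := by
          rw [Matrix.mulVec_sub, Matrix.mulVec_smul, Matrix.mulVec_smul,
            ← hu_def, ← hw_def, hu, hw]
          funext i; fin_cases i <;> simp [hu1, hu2, hw1, hw2] <;> ring
        have hx0 := hinj _ hx
        have h00 : C 0 0 = 0 := by
          have := congrFun hx0 1
          simpa using this
        apply hune
        rw [hu]
        funext i; fin_cases i <;> simp [h00, hC10, hC20]
      · have : w ∈ L₂ := h ▸ Submodule.subset_span (by simp)
        have := hL₂mem w this
        rw [hw] at this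
        simpa using this
    -- C 0 0 ≠ 0
    have hc00 : C 0 0 ≠ 0 := by
      intro h00
      apply hune
      rw [hu]
      funext i; fin_cases i <;> simp [h00, hC10, hC20]
    -- entrywise equations from C * M' k = M k * C
    have hentry : ∀ k (i j : Fin 3), (C * M' k) i j = (M k * C) i j := fun k i j => by
      rw [hcm k]
    have eq01 : ∀ k, C 0 0 * a k + C 0 1 * μ₂ k = μ₁ k * C 0 1 + a k * C 1 1 := by
      intro k
      have h := hentry k 0 1
      rw [hM k, hM' k] at h
      simp [Matrix.mul_apply, Fin.sum_univ_three, hC21] at h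
      linear_combination h
    have eq12 : ∀ k, C 1 1 * b k + C 1 2 * μ₃ k = μ₂ k * C 1 2 + b k * C 2 2 := by
      intro k
      have h := hentry k 1 2
      rw [hM k, hM' k] at h
      simp [Matrix.mul_apply, Fin.sum_univ_three, hC10] at h
      linear_combination h
    have eq02 : ∀ k, C 0 0 * g' k + C 0 1 * b k + C 0 2 * μ₃ k
        = μ₁ k * C 0 2 + a k * C 1 2 + g k * C 2 2 := by
      intro k
      have h := hentry k 0 2
      rw [hM k, hM' k] at h
      simp [Matrix.mul_apply, Fin.sum_univ_three] at h
      linear_combination h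
    -- Step E : C 0 0 = C 1 1
    have hE : C 0 0 = C 1 1 := by
      by_contra hne
      set t : ℂ := C 0 1 / (C 1 1 - C 0 0) with ht
      have hsub : C 1 1 - C 0 0 ≠ 0 := sub_ne_zero.mpr (Ne.symm hne)
      have hak : ∀ k, a k + t * (μ₁ k - μ₂ k) = 0 := by
        intro k
        rw [ht]
        field_simp
        linear_combination -eq01 k
      set v : Fin 3 → ℂ := ![t, 1, 0] with hv
      have hMv : ∀ k, (M k).mulVec v = μ₂ k • v := by
        intro k
        rw [hM k, hv, tri_mulVec]
        funext i; fin_cases i <;> simp <;> linear_combination hak k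
      have hXinv : ∀ k, ∀ x ∈ Submodule.span ℂ {v}, (M k).mulVec x ∈ Submodule.span ℂ {v} := by
        intro k x hx
        rw [Submodule.mem_span_singleton] at hx ⊢
        obtain ⟨c, rfl⟩ := hx
        exact ⟨c * μ₂ k, by rw [Matrix.mulVec_smul, hMv k, smul_smul]⟩
      have e0notin : (![1,0,0] : Fin 3 → ℂ) ∉ Submodule.span ℂ {v} := by
        rw [Submodule.mem_span_singleton]
        rintro ⟨c, hc⟩
        have h1 : c * 1 = 0 := by simpa [hv] using congrFun hc 1
        have h0 : c * t = 1 := by simpa [hv] using congrFun hc 0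
        rw [mul_one] at h1
        rw [h1, zero_mul] at h0
        exact zero_ne_one h0
      rcases honly _ hXinv with h | h | h | h
      · have : v ∈ (⊥ : Submodule ℂ (Fin 3 → ℂ)) := h ▸ Submodule.mem_span_singleton_self v
        have hv0 : v = 0 := by simpa using this
        have := congrFun hv0 1
        simp [hv] at this
      · exact e0notin (h ▸ Submodule.mem_top)
      · have : v ∈ L₁ := h ▸ Submodule.mem_span_singleton_self v
        have := (hL₁mem v this).1
        simp [hv] at this
      · exact e0notin (by rw [h, hL₂]; exact Submodule.subset_span (by simp))
    -- Step F : C 1 1 = C 2 2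
    have hF : C 1 1 = C 2 2 := by
      by_contra hne
      set s : ℂ := C 1 2 / (C 2 2 - C 1 1) with hs
      have hsub : C 2 2 - C 1 1 ≠ 0 := sub_ne_zero.mpr (Ne.symm hne)
      have hbk : ∀ k, b k + s * (μ₂ k - μ₃ k) = 0 := by
        intro k
        rw [hs]
        field_simp
        linear_combination -eq12 k
      set v : Fin 3 → ℂ := ![0, s, 1] with hv
      have hMv : ∀ k, (M k).mulVec v = (a k * s + g k) • ![1,0,0] + μ₃ k • v := by
        intro k
        rw [hM k, hv, tri_mulVec]
        funext i; fin_cases i <;> simp <;> linear_combination hbk k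
      have hXinv : ∀ k, ∀ x ∈ Submodule.span ℂ {![1,0,0], v},
          (M k).mulVec x ∈ Submodule.span ℂ {![1,0,0], v} := by
        intro k x hx
        rw [Submodule.mem_span_pair] at hx ⊢
        obtain ⟨c, d, rfl⟩ := hx
        refine ⟨c * μ₁ k + d * (a k * s + g k), d * μ₃ k, ?_⟩
        have hMe0 : (M k).mulVec ![1,0,0] = μ₁ k • ![1,0,0] := by
          rw [hM k, tri_mulVec]
          funext i; fin_cases i <;> simp
        rw [Matrix.mulVec_add, Matrix.mulVec_smul, Matrix.mulVec_smul, hMe0, hMv k]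
        module
      rcases honly _ hXinv with h | h | h | h
      · have : (![1,0,0] : Fin 3 → ℂ) ∈ (⊥ : Submodule ℂ (Fin 3 → ℂ)) :=
          h ▸ Submodule.subset_span (by simp)
        have h0 : (![1,0,0] : Fin 3 → ℂ) = 0 := by simpa using this
        have := congrFun h0 0
        simp at this
      · have : (![0,1,0] : Fin 3 → ℂ) ∈ Submodule.span ℂ {![1,0,0], v} :=
          h ▸ Submodule.mem_top
        rw [Submodule.mem_span_pair] at this
        obtain ⟨c, d, hcd⟩ := this
        have h2 : d * 1 = 0 := by simpa [hv] using congrFun hcd 2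
        have h1 : d * s = 1 := by simpa [hv] using congrFun hcd 1
        rw [mul_one] at h2
        rw [h2, zero_mul] at h1
        exact zero_ne_one h1
      · have : v ∈ L₁ := h ▸ Submodule.subset_span (by simp)
        have := (hL₁mem v this).2
        simp [hv] at this
      · have : v ∈ L₂ := h ▸ Submodule.subset_span (by simp)
        have := hL₂mem v this
        simp [hv] at this
    -- conclusion
    refine ⟨C 0 1 / C 0 0, C 1 2 / C 0 0, C 0 2 / C 0 0, fun k => ⟨?_, ?_, ?_⟩⟩
    · have A1 : C 0 1 * (μ₁ k - μ₂ k) = 0 := by linear_combination a k * hE - eq01 k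
      rw [div_mul_eq_mul_div, A1, zero_div]
    · have A2 : C 1 2 * (μ₂ k - μ₃ k) = 0 := by linear_combination b k * hF - eq12 k
      rw [div_mul_eq_mul_div, A2, zero_div]
    · have A3 : C 0 0 * g' k = C 0 0 * g k + C 0 2 * (μ₁ k - μ₃ k)
          - C 0 1 * b k + C 1 2 * a k := by
        linear_combination eq02 k - g k * (hE.trans hF)
      field_simp
      linear_combination A3
  · rintro ⟨al, be, ga, h⟩
    set C : Matrix (Fin 3) (Fin 3) ℂ := !![1, al, ga; 0, 1, be; 0, 0, 1] with hCdef
    have hdet : C.det = 1 := by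
      simp [hCdef, Matrix.det_fin_three, Matrix.vecHead, Matrix.vecTail]
    have hCu : IsUnit C := (Matrix.isUnit_iff_isUnit_det C).mpr (hdet ▸ isUnit_one)
    have hCC : C⁻¹ * C = 1 := Matrix.nonsing_inv_mul C (hdet ▸ isUnit_one)
    refine ⟨C, hCu, fun k => ?_⟩
    obtain ⟨h1, h2, h3⟩ := h k
    have hcm : C * M' k = M k * C := by
      rw [hM k, hM' k, hCdef]
      ext i j
      fin_cases i <;> fin_cases j
      all_goals
        simp [Matrix.mul_apply, Fin.sum_univ_three, Matrix.vecHead, Matrix.vecTail,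
          -mul_eq_mul_right_iff, -mul_eq_mul_left_iff]
      all_goals
        first
          | ring1
          | linear_combination h1
          | linear_combination -h1
          | linear_combination h2
          | linear_combination -h2
          | linear_combination h3
          | linear_combination -h3
          | linear_combination h3 + h1
          | linear_combination h3 - h1
          | linear_combination -h3 + h1
          | linear_combination -h3 - h1
    calc M' k = 1 * M' k := by rw [Matrix.one_mul]
      _ = C⁻¹ * C * M' k := by rw [hCC]
      _ = C⁻¹ * (C * M' k) := by rw [Matrix.mul_assoc]
      _ = C⁻¹ * (M k * C) := by rw [hcm]
      _ = C⁻¹ * M k * C := by rw [Matrix.mul_assoc]
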